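/- For all integers r ≥ 2 and t₁,…,t_r ≥ 1, the extremal number of the complete r-partite r-graph satisfies ex(n, K^{(r)}_{t₁,…,t_r}) ≤ O_{t₁,…,t_r}(n^{r − 1/(t₁⋯t_{r−1})}). -/

import Mathlib

open Finset

/-- An `r`-uniform hypergraph on vertex type `V`: a set of edges, each an `r`-element
subset of `V`. -/
structure HGraph (r : ℕ) (V : Type) where
  edges : Finset (Finset V)
  uniform : ∀ e ∈ edges, e.card = r

variable {r : ℕ} {α β γ : Type}

/-- The set of homomorphisms from `F` to `H`: maps sending every edge of `F` to an edge of `H`. -/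
def homFinset [Fintype α] [DecidableEq α] [Fintype β] [DecidableEq β]
    (F : HGraph r α) (H : HGraph r β) : Finset (α → β) :=
  Finset.univ.filter fun φ => ∀ e ∈ F.edges, e.image φ ∈ H.edges

/-- The number of homomorphisms from `F` to `H`. -/
def homCount [Fintype α] [DecidableEq α] [Fintype β] [DecidableEq β]
    (F : HGraph r α) (H : HGraph r β) : ℕ :=
  (homFinset F H).card

/-- The homomorphism density `t_F(H) = hom(F,H) / v(H)^{v(F)}`. -/
noncomputable def homDensity [Fintype α] [DecidableEq α] [Fintype β] [DecidableEq β]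
    (F : HGraph r α) (H : HGraph r β) : ℝ :=
  (homCount F H : ℝ) / (Fintype.card β : ℝ) ^ (Fintype.card α)

/-- `K_r^{(r)}`: the `r`-graph consisting of a single edge on `r` vertices. -/
def KEdge (r : ℕ) : HGraph r (Fin r) :=
  ⟨{Finset.univ}, by intro e he; rw [Finset.mem_singleton] at he; subst he; simp⟩

/-- Edge density of an `r`-graph, `t_{K_r^{(r)}}(H)`. -/
noncomputable def edgeDensity [Fintype β] [DecidableEq β] (H : HGraph r β) : ℝ :=
  homDensity (KEdge r) H

/-- An `r`-graph `F` is Sidorenko if `t_F(H) ≥ t_{K_r^{(r)}}(H)^{e(F)}` for all `r`-graphs `H`. -/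
def IsSidorenko [Fintype α] [DecidableEq α] (F : HGraph r α) : Prop :=
  ∀ (β : Type) [Fintype β] [DecidableEq β] (H : HGraph r β),
    homDensity F H ≥ edgeDensity H ^ F.edges.card

/-- The Sidorenko exponent
`s(F) = sup {s ≥ 0 : ∃ r-graph H with t_F(H) = t_{K_r^{(r)}}(H)^s > 0}`. -/
noncomputable def sidorenkoExp [Fintype α] [DecidableEq α] (F : HGraph r α) : ℝ :=
  sSup {s : ℝ | 0 ≤ s ∧ ∃ (n : ℕ) (H : HGraph r (Fin n)),
    homDensity F H = edgeDensity H ^ s ∧ 0 < edgeDensity H ^ s}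

/-- `d_M(U)`: the number of edges of `M` containing at least one vertex of `U`. -/
def degNear [DecidableEq α] (M : HGraph r α) (U : Finset α) : ℕ :=
  (M.edges.filter fun e => ∃ v ∈ U, v ∈ e).card

/-- The set of vertices appearing in some edge of a given edge set. -/
def edgeSupport [DecidableEq α] (Es : Finset (Finset α)) : Finset α :=
  Es.biUnion id
/-- `H` contains a copy of `G` as a sub-hypergraph. -/
def HGraph.ContainsCopy [DecidableEq β] (H : HGraph r β) (G : HGraph r γ) : Prop :=
  ∃ φ : γ → β, Function.Injective φ ∧ ∀ e ∈ G.edges, e.image φ ∈ H.edges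

/-- The extremal (Turán) number `ex(n, G)`: the maximum number of edges of an
`n`-vertex `r`-graph containing no sub-hypergraph isomorphic to `G`. -/
noncomputable def exNum {γ : Type} (n : ℕ) (G : HGraph r γ) : ℕ :=
  sSup {m : ℕ | ∃ H : HGraph r (Fin n), H.edges.card = m ∧ ¬ H.ContainsCopy G}

/-- The complete `r`-partite `r`-graph `K^{(r)}_{t 0, …, t (r-1)}`: the vertex set is
the disjoint union of parts of sizes `t i`, and the edges are all `r`-sets with exactly
one vertex in each part. -/
def completeMultipartite (r : ℕ) (t : Fin r → ℕ) : HGraph r (Σ i : Fin r, Fin (t i)) where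
  edges := Finset.univ.filter fun e : Finset (Σ i : Fin r, Fin (t i)) =>
    ∀ i : Fin r, (e.filter fun x => x.1 = i).card = 1
  uniform := by
    intro e he
    simp only [Finset.mem_filter, Finset.mem_univ, true_and] at he
    rw [Finset.card_eq_sum_card_fiberwise (f := Sigma.fst) (t := Finset.univ)
      (fun x _ => Finset.mem_univ _)]
    simp [he]

private def HasBox {V : Type} [DecidableEq V] {r : ℕ} (E : Finset (Finset V)) (t : Fin r → ℕ) : Prop :=
  ∃ A : Fin r → Finset V, (∀ i, (A i).card = t i) ∧
    ∀ g : Fin r → V, (∀ i, g i ∈ A i) → Finset.image g Finset.univ ∈ E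

private lemma cast_sub_ge (a b : ℕ) : (a : ℝ) - (b : ℝ) ≤ ((a - b : ℕ) : ℝ) := by
  rcases le_total b a with h | h
  · rw [Nat.cast_sub h]
  · rw [Nat.sub_eq_zero_of_le h]
    have : (a : ℝ) ≤ (b : ℝ) := by exact_mod_cast h
    push_cast
    linarith

private lemma sub_pow_le_mul_choose (d s : ℕ) : (d - s) ^ s ≤ s ^ s * d.choose s :=
  calc (d - s) ^ s ≤ (d + 1 - s) ^ s := Nat.pow_le_pow_left (by omega) s
    _ ≤ d.descFactorial s := Nat.pow_sub_le_descFactorial d s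
    _ = s.factorial * d.choose s := Nat.descFactorial_eq_factorial_mul_choose d s
    _ ≤ s ^ s * d.choose s := Nat.mul_le_mul_right _ (Nat.factorial_le_pow s)

private lemma double_count {n r s : ℕ} (E : Finset (Finset (Fin n))) :
    ∑ A ∈ powersetCard s (univ : Finset (Fin n)),
        ((powersetCard r (univ : Finset (Fin n))).filter (fun f => ∀ a ∈ A, insert a f ∈ E)).card
      = ∑ f ∈ powersetCard r (univ : Finset (Fin n)),
          ((univ : Finset (Fin n)).filter (fun v => insert v f ∈ E)).card.choose s := by
  classical
  simp_rw [Finset.card_filter]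
  rw [Finset.sum_comm]
  refine Finset.sum_congr rfl fun f _ => ?_
  rw [← Finset.card_filter]
  have h : (powersetCard s (univ : Finset (Fin n))).filter (fun A => ∀ a ∈ A, insert a f ∈ E)
      = powersetCard s ((univ : Finset (Fin n)).filter (fun v => insert v f ∈ E)) := by
    ext A
    simp only [Finset.mem_filter, Finset.mem_powersetCard, Finset.subset_iff, Finset.mem_univ,
      true_and]
    tauto
  rw [h, Finset.card_powersetCard, Finset.card_filter]

private lemma card_le_sum_deg {n r : ℕ} (E : Finset (Finset (Fin n)))
    (hunif : ∀ e ∈ E, e.card = r + 1) :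
    E.card ≤ ∑ f ∈ powersetCard r (univ : Finset (Fin n)),
      ((univ : Finset (Fin n)).filter (fun v => insert v f ∈ E)).card := by
  classical
  have key : ∑ f ∈ powersetCard r (univ : Finset (Fin n)),
      ((univ : Finset (Fin n)).filter (fun v => insert v f ∈ E)).card
      = (((powersetCard r (univ : Finset (Fin n))) ×ˢ (univ : Finset (Fin n))).filter
          (fun p => insert p.2 p.1 ∈ E)).card := by
    rw [Finset.card_filter, Finset.sum_product]
    simp_rw [Finset.card_filter]
  rw [key]
  refine Finset.card_le_card_of_surjOn (fun p => insert p.2 p.1) ?_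
  intro e he
  simp only [Finset.mem_coe] at he
  have hc := hunif e he
  have hne : e.Nonempty := Finset.card_pos.mp (by omega)
  obtain ⟨v, hv⟩ := hne
  refine ⟨(e.erase v, v), ?_, by simp [Finset.insert_erase hv]⟩
  simp only [Finset.mem_coe, Finset.mem_filter, Finset.mem_product, Finset.mem_powersetCard]
  refine ⟨⟨⟨Finset.subset_univ _, ?_⟩, Finset.mem_univ v⟩, ?_⟩
  · rw [Finset.card_erase_of_mem hv, hc]; omega
  · rw [Finset.insert_erase hv]; exact he

private lemma prod_split {r : ℕ} (hr : 0 < r) (t : Fin (r + 1) → ℕ) :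
    ∏ i ∈ (univ : Finset (Fin (r + 1))).filter (fun i : Fin (r + 1) => (i : ℕ) < (r + 1) - 1), (t i : ℝ)
      = (t 0 : ℝ) * ∏ i ∈ (univ : Finset (Fin r)).filter (fun i : Fin r => (i : ℕ) < r - 1),
          (t i.succ : ℝ) := by
  rw [Finset.prod_filter, Finset.prod_filter, Fin.prod_univ_succ]
  congr 1
  · rw [if_pos]
    simpa using hr
  · refine Finset.prod_congr rfl fun i _ => ?_
    have hiff : ((i.succ : Fin (r + 1)) : ℕ) < (r + 1) - 1 ↔ (i : ℕ) < r - 1 := by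
      simp only [Fin.val_succ]
      omega
    exact if_congr hiff rfl rfl

private lemma key_bound : ∀ (r : ℕ), 1 ≤ r → ∀ t : Fin r → ℕ, (∀ i, 1 ≤ t i) →
    ∃ C : ℝ, 0 < C ∧ ∀ (n : ℕ) (E : Finset (Finset (Fin n))),
      (∀ e ∈ E, e.card = r) → ¬ HasBox E t →
      (E.card : ℝ) ≤ C * (n : ℝ) ^ ((r : ℝ) -
        1 / ∏ i ∈ (univ : Finset (Fin r)).filter (fun i : Fin r => (i : ℕ) < r - 1), (t i : ℝ)) := by
  intro r
  induction r with
  | zero => omega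
  | succ r ih =>
    intro _ t ht
    rcases Nat.eq_zero_or_pos r with rfl | hr
    · -- base case r = 1
      refine ⟨(t 0 : ℝ), by exact_mod_cast ht 0, ?_⟩
      intro n E hunif hnb
      have hprod : ∏ i ∈ (univ : Finset (Fin 1)).filter
          (fun i : Fin 1 => (i : ℕ) < 0), (t i : ℝ) = 1 := by
        rw [Finset.filter_false_of_mem, Finset.prod_empty]
        intro i _
        omega
      rw [show ((0 + 1 : ℕ) : ℝ) = 1 by norm_num, hprod, show (1 : ℝ) - 1 / 1 = 0 by norm_num,
        Real.rpow_zero, mul_one]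
      by_contra hlt
      push_neg at hlt
      have hcard : t 0 ≤ E.card := by exact_mod_cast hlt.le
      apply hnb
      have hsing : ∀ e ∈ E, ∃ x, e = {x} := fun e he => Finset.card_eq_one.mp (hunif e he)
      have hbi : E.card ≤ (E.biUnion id).card := by
        rw [Finset.card_biUnion]
        · calc E.card = ∑ _e ∈ E, 1 := by rw [Finset.sum_const, smul_eq_mul, mul_one]
            _ ≤ ∑ e ∈ E, (id e).card := by
                refine Finset.sum_le_sum fun e he => ?_
                simp only [id]
                rw [hunif e he]
        · intro x hx y hy hxy
          obtain ⟨a, rfl⟩ := hsing x hx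
          obtain ⟨b, rfl⟩ := hsing y hy
          simp only [Function.onFun, id, Finset.disjoint_singleton]
          exact fun h => hxy (by rw [h])
      obtain ⟨A', hA'sub, hA'card⟩ := Finset.exists_subset_card_eq
        (le_trans hcard hbi)
      refine ⟨fun _ => A', fun i => ?_, ?_⟩
      · rw [show i = 0 from Fin.fin_one_eq_zero i]
        exact hA'card
      · intro g hg
        have himg : Finset.image g Finset.univ = {g 0} := by
          ext y
          simp only [Finset.mem_image, Finset.mem_singleton, Finset.mem_univ, true_and]
          constructor
          · rintro ⟨k, rfl⟩
            rw [show k = 0 from Fin.fin_one_eq_zero k]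
          · intro h
            exact ⟨0, h.symm⟩
        rw [himg]
        have hmem : g 0 ∈ E.biUnion id := hA'sub (hg 0)
        rw [Finset.mem_biUnion] at hmem
        obtain ⟨e, heE, hge⟩ := hmem
        obtain ⟨x, rfl⟩ := hsing e heE
        simp only [id, Finset.mem_singleton] at hge
        rw [hge]
        exact heE
    · -- inductive step
      have hs1 : 1 ≤ t 0 := ht 0
      obtain ⟨C', hC'pos, hC'⟩ := ih hr (fun i : Fin r => t i.succ) (fun i : Fin r => ht i.succ)
      set s : ℕ := t 0 with hs_def
      set P : ℝ := ∏ i ∈ (univ : Finset (Fin r)).filter (fun i : Fin r => (i : ℕ) < r - 1),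
        (t (Fin.succ i) : ℝ) with hP_def
      have hP1 : (1 : ℝ) ≤ P := by
        rw [hP_def]
        rw [← Nat.cast_prod]
        have h1 : 1 ≤ ∏ i ∈ (univ : Finset (Fin r)).filter (fun i : Fin r => (i : ℕ) < r - 1),
            t (Fin.succ i) := Finset.one_le_prod' fun i _ => ht (Fin.succ i)
        exact_mod_cast h1
      have hP0 : (0 : ℝ) < P := lt_of_lt_of_le one_pos hP1
      have hsR1 : (1 : ℝ) ≤ (s : ℝ) := by exact_mod_cast hs1
      have hsP1 : (1 : ℝ) ≤ (s : ℝ) * P := by nlinarith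
      set K : ℝ := ((s : ℝ) ^ s * C') ^ (1 / (s : ℝ)) with hK_def
      have hKpos : 0 < K := Real.rpow_pos_of_pos (by positivity) _
      refine ⟨2 * (s : ℝ) + 2 * K, by positivity, ?_⟩
      intro n E hunif hnb
      rw [prod_split hr t, ← hs_def, ← hP_def]
      rcases Nat.eq_zero_or_pos n with rfl | hn
      · have hE : E = ∅ := by
          rw [Finset.eq_empty_iff_forall_notMem]
          intro e he
          have h1 := hunif e he
          have h2 : e = ∅ := Finset.eq_empty_of_forall_notMem fun x _ => x.elim0
          rw [h2] at h1
          simp at h1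
        rw [hE]
        simp only [Finset.card_empty, Nat.cast_zero]
        positivity
      · have hn1 : (1 : ℝ) ≤ (n : ℝ) := by exact_mod_cast hn
        have hn0 : (0 : ℝ) < (n : ℝ) := lt_of_lt_of_le one_pos hn1
        set F := powersetCard r (univ : Finset (Fin n)) with hF_def
        set d : Finset (Fin n) → ℕ :=
          fun f => ((univ : Finset (Fin n)).filter (fun v => insert v f ∈ E)).card with hd_def
        have hb0 : 0 ≤ C' * (n : ℝ) ^ ((r : ℝ) - 1 / P) :=
          mul_nonneg hC'pos.le (Real.rpow_nonneg hn0.le _)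
        have hEA : ∀ A ∈ powersetCard s (univ : Finset (Fin n)),
            ((F.filter (fun f => ∀ a ∈ A, insert a f ∈ E)).card : ℝ)
              ≤ C' * (n : ℝ) ^ ((r : ℝ) - 1 / P) := by
          intro A hA
          apply hC' n
          · intro f hf
            rw [hF_def] at hf
            exact (Finset.mem_powersetCard.mp (Finset.mem_filter.mp hf).1).2
          · rintro ⟨B, hBcard, hBtr⟩
            apply hnb
            refine ⟨Fin.cons A B, fun i => ?_, fun g hg => ?_⟩
            · refine Fin.cases ?_ (fun j => ?_) i
              · rw [Fin.cons_zero]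
                exact (Finset.mem_powersetCard.mp hA).2
              · rw [Fin.cons_succ]
                exact hBcard j
            · have htail : ∀ i : Fin r, (g ∘ Fin.succ) i ∈ B i := by
                intro i
                have h := hg i.succ
                rwa [Fin.cons_succ] at h
              have hmem := hBtr (g ∘ Fin.succ) htail
              rw [Finset.mem_filter] at hmem
              have himg : Finset.image g Finset.univ
                  = insert (g 0) (Finset.image (g ∘ Fin.succ) Finset.univ) := by
                ext y
                simp only [Finset.mem_image, Finset.mem_insert, Finset.mem_univ, true_and,
                  Function.comp_apply]
                constructor
                · rintro ⟨k, rfl⟩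
                  rcases Fin.eq_zero_or_eq_succ k with rfl | ⟨j, rfl⟩
                  · exact Or.inl rfl
                  · exact Or.inr ⟨j, rfl⟩
                · rintro (rfl | ⟨j, rfl⟩)
                  · exact ⟨0, rfl⟩
                  · exact ⟨j.succ, rfl⟩
              rw [himg]
              refine hmem.2 (g 0) ?_
              have h := hg 0
              rwa [Fin.cons_zero] at h
        have h_dc : ((∑ f ∈ F, (d f).choose s : ℕ) : ℝ)
            ≤ (n : ℝ) ^ (s : ℕ) * (C' * (n : ℝ) ^ ((r : ℝ) - 1 / P)) := by
          have he : ∑ f ∈ F, (d f).choose s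
              = ∑ A ∈ powersetCard s (univ : Finset (Fin n)),
                  (F.filter (fun f => ∀ a ∈ A, insert a f ∈ E)).card := by
            simp only [hF_def, hd_def]
            exact (double_count E).symm
          rw [he, Nat.cast_sum]
          calc ∑ A ∈ powersetCard s (univ : Finset (Fin n)),
                ((F.filter (fun f => ∀ a ∈ A, insert a f ∈ E)).card : ℝ)
              ≤ ∑ _A ∈ powersetCard s (univ : Finset (Fin n)), C' * (n : ℝ) ^ ((r : ℝ) - 1 / P) :=
                Finset.sum_le_sum hEA
            _ = ((powersetCard s (univ : Finset (Fin n))).card : ℝ)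
                  * (C' * (n : ℝ) ^ ((r : ℝ) - 1 / P)) := by
                rw [Finset.sum_const, nsmul_eq_mul]
            _ ≤ (n : ℝ) ^ (s : ℕ) * (C' * (n : ℝ) ^ ((r : ℝ) - 1 / P)) := by
                refine mul_le_mul_of_nonneg_right ?_ hb0
                rw [Finset.card_powersetCard, Finset.card_univ, Fintype.card_fin]
                exact_mod_cast Nat.choose_le_pow n s
        have h_lower : (E.card : ℝ) ≤ ((∑ f ∈ F, d f : ℕ) : ℝ) := by
          have h := card_le_sum_deg E hunif
          rw [hF_def, hd_def]
          exact_mod_cast h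
        have hFcard : ((F.card : ℕ) : ℝ) ≤ (n : ℝ) ^ (r : ℕ) := by
          rw [hF_def, Finset.card_powersetCard, Finset.card_univ, Fintype.card_fin]
          exact_mod_cast Nat.choose_le_pow n r
        have h_split : ((∑ f ∈ F, d f : ℕ) : ℝ)
            ≤ (∑ f ∈ F, ((d f - s : ℕ) : ℝ)) + (s : ℝ) * (F.card : ℝ) := by
          rw [Nat.cast_sum]
          have hle : ∀ f ∈ F, ((d f : ℕ) : ℝ) ≤ ((d f - s : ℕ) : ℝ) + (s : ℝ) := by
            intro f _
            have h := cast_sub_ge (d f) s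
            linarith
          calc ∑ f ∈ F, ((d f : ℕ) : ℝ) ≤ ∑ f ∈ F, (((d f - s : ℕ) : ℝ) + (s : ℝ)) :=
              Finset.sum_le_sum hle
            _ = (∑ f ∈ F, ((d f - s : ℕ) : ℝ)) + (s : ℝ) * (F.card : ℝ) := by
              rw [Finset.sum_add_distrib, Finset.sum_const, nsmul_eq_mul]
              ring
        set ε : ℝ := ((r : ℝ) + 1) - 1 / ((s : ℝ) * P) with hε_def
        have hgoalexp : ((r + 1 : ℕ) : ℝ) - 1 / ((s : ℝ) * P) = ε := by
          rw [hε_def]; push_cast; ring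
        have hexp_r_le : (n : ℝ) ^ (r : ℕ) ≤ (n : ℝ) ^ ε := by
          rw [← Real.rpow_natCast (n : ℝ) r]
          apply Real.rpow_le_rpow_of_exponent_le hn1
          have h3 : 1 / ((s : ℝ) * P) ≤ 1 := by
            rw [div_le_one (lt_of_lt_of_le one_pos hsP1)]
            exact hsP1
          rw [hε_def]; linarith
        have hrpow_nonneg : (0 : ℝ) ≤ (n : ℝ) ^ ε := Real.rpow_nonneg hn0.le _
        rw [hgoalexp]
        by_cases hcase : (E.card : ℝ) ≤ 2 * (s : ℝ) * (n : ℝ) ^ (r : ℕ)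
        · calc (E.card : ℝ) ≤ 2 * (s : ℝ) * (n : ℝ) ^ (r : ℕ) := hcase
            _ ≤ 2 * (s : ℝ) * (n : ℝ) ^ ε :=
                mul_le_mul_of_nonneg_left hexp_r_le (by positivity)
            _ ≤ (2 * (s : ℝ) + 2 * K) * (n : ℝ) ^ ε := by
                refine mul_le_mul_of_nonneg_right ?_ hrpow_nonneg
                linarith
        · push_neg at hcase
          have hnr1 : (1 : ℝ) ≤ (n : ℝ) ^ (r : ℕ) := one_le_pow₀ hn1
          have hsF : (s : ℝ) * (F.card : ℝ) ≤ (E.card : ℝ) / 2 := by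
            have h1 : (s : ℝ) * (F.card : ℝ) ≤ (s : ℝ) * (n : ℝ) ^ (r : ℕ) :=
              mul_le_mul_of_nonneg_left hFcard (by positivity)
            linarith
          have hGe : (E.card : ℝ) / 2 ≤ ∑ f ∈ F, ((d f - s : ℕ) : ℝ) := by linarith
          have hecard_pos : (0 : ℝ) < (E.card : ℝ) := lt_of_le_of_lt (by positivity) hcase
          have hFpos : (0 : ℝ) < (F.card : ℝ) := by
            rcases Finset.eq_empty_or_nonempty F with hFe | hFne
            · exfalso
              rw [hFe] at hGe
              simp only [Finset.sum_empty] at hGe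
              linarith
            · exact_mod_cast Finset.card_pos.mpr hFne
          have hjensen := pow_sum_div_card_le_sum_pow
            (s := F) (f := fun f => ((d f - s : ℕ) : ℝ)) (fun i _ => Nat.cast_nonneg _) (s - 1)
          rw [Nat.sub_add_cancel hs1] at hjensen
          have hjensen2 : (∑ f ∈ F, ((d f - s : ℕ) : ℝ)) ^ s
              ≤ (F.card : ℝ) ^ (s - 1) * ∑ f ∈ F, ((d f - s : ℕ) : ℝ) ^ s := by
            rw [div_le_iff₀ (pow_pos hFpos _)] at hjensen
            linarith
          have hsum_pow : ∑ f ∈ F, ((d f - s : ℕ) : ℝ) ^ s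
              ≤ (s : ℝ) ^ s * ((∑ f ∈ F, (d f).choose s : ℕ) : ℝ) := by
            rw [Nat.cast_sum, Finset.mul_sum]
            refine Finset.sum_le_sum fun f _ => ?_
            have h := sub_pow_le_mul_choose (d f) s
            calc ((d f - s : ℕ) : ℝ) ^ s = (((d f - s) ^ s : ℕ) : ℝ) := by push_cast; ring
              _ ≤ ((s ^ s * (d f).choose s : ℕ) : ℝ) := by exact_mod_cast h
              _ = (s : ℝ) ^ s * ((d f).choose s : ℝ) := by push_cast; ring
          have hcomb : ((E.card : ℝ) / 2) ^ s
              ≤ (s : ℝ) ^ s * C' * ((n : ℝ) ^ ((r : ℕ) * (s - 1) + s : ℕ)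
                  * (n : ℝ) ^ ((r : ℝ) - 1 / P)) := by
            calc ((E.card : ℝ) / 2) ^ s ≤ (∑ f ∈ F, ((d f - s : ℕ) : ℝ)) ^ s :=
                pow_le_pow_left₀ (by positivity) hGe s
              _ ≤ (F.card : ℝ) ^ (s - 1) * ∑ f ∈ F, ((d f - s : ℕ) : ℝ) ^ s := hjensen2
              _ ≤ ((n : ℝ) ^ (r : ℕ)) ^ (s - 1)
                    * ((s : ℝ) ^ s * ((n : ℝ) ^ (s : ℕ) * (C' * (n : ℝ) ^ ((r : ℝ) - 1 / P)))) := by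
                  refine mul_le_mul ?_ ?_ ?_ ?_
                  · exact pow_le_pow_left₀ (Nat.cast_nonneg _) hFcard _
                  · exact le_trans hsum_pow (mul_le_mul_of_nonneg_left h_dc (by positivity))
                  · exact Finset.sum_nonneg fun f _ => by positivity
                  · positivity
              _ = (s : ℝ) ^ s * C' * ((n : ℝ) ^ ((r : ℕ) * (s - 1) + s : ℕ)
                    * (n : ℝ) ^ ((r : ℝ) - 1 / P)) := by
                  rw [← pow_mul]
                  ring
          have hq : (n : ℝ) ^ ((r : ℕ) * (s - 1) + s : ℕ) * (n : ℝ) ^ ((r : ℝ) - 1 / P)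
              = (n : ℝ) ^ ((((r : ℕ) * (s - 1) + s : ℕ) : ℝ) + ((r : ℝ) - 1 / P)) := by
            rw [← Real.rpow_natCast (n : ℝ) ((r : ℕ) * (s - 1) + s), ← Real.rpow_add hn0]
          have hqval : ((((r : ℕ) * (s - 1) + s : ℕ) : ℝ) + ((r : ℝ) - 1 / P))
              = (r : ℝ) * (s : ℝ) + (s : ℝ) - 1 / P := by
            push_cast [Nat.cast_sub hs1]
            ring
          rw [hq, hqval] at hcomb
          have hroot : (E.card : ℝ) / 2 ≤ K * (n : ℝ) ^ ε := by
            have hx : (0 : ℝ) ≤ (E.card : ℝ) / 2 := by positivity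
            have h1 : ((E.card : ℝ) / 2) = (((E.card : ℝ) / 2) ^ (s : ℕ)) ^ (1 / (s : ℝ)) := by
              rw [← Real.rpow_natCast ((E.card : ℝ) / 2) s, ← Real.rpow_mul hx, mul_one_div,
                div_self (by positivity : (s : ℝ) ≠ 0), Real.rpow_one]
            rw [h1]
            have h2 := Real.rpow_le_rpow (pow_nonneg hx _) hcomb
              (by positivity : (0 : ℝ) ≤ 1 / (s : ℝ))
            refine le_trans h2 ?_
            have hss : (0 : ℝ) ≤ (s : ℝ) ^ s * C' := by positivity
            rw [Real.mul_rpow hss (Real.rpow_nonneg hn0.le _), ← Real.rpow_mul hn0.le]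
            have hε2 : ((r : ℝ) * (s : ℝ) + (s : ℝ) - 1 / P) * (1 / (s : ℝ)) = ε := by
              rw [hε_def]
              have hsne : (s : ℝ) ≠ 0 := by positivity
              have hPne : P ≠ 0 := ne_of_gt hP0
              field_simp
            rw [hε2, ← hK_def]
          calc (E.card : ℝ) ≤ 2 * K * (n : ℝ) ^ ε := by linarith
            _ ≤ (2 * (s : ℝ) + 2 * K) * (n : ℝ) ^ ε := by
                refine mul_le_mul_of_nonneg_right ?_ hrpow_nonneg
                linarith

private lemma hasBox_containsCopy {n r : ℕ} (t : Fin r → ℕ) (ht : ∀ i, 1 ≤ t i)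
    (H : HGraph r (Fin n)) (hb : HasBox H.edges t) :
    H.ContainsCopy (completeMultipartite r t) := by
  classical
  obtain ⟨A, hA, htrans⟩ := hb
  have hne : ∀ i, (A i).Nonempty := fun i => Finset.card_pos.mp (by rw [hA]; exact ht i)
  have hdisj : ∀ i j, i ≠ j → ∀ x, x ∈ A i → x ∈ A j → False := by
    intro i j hij x hxi hxj
    set g : Fin r → Fin n := fun k => if k = i then x else if k = j then x else (hne k).choose
      with hg_def
    have hg : ∀ k, g k ∈ A k := by
      intro k
      by_cases h1 : k = i
      · subst h1
        simp only [hg_def, if_pos rfl]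
        exact hxi
      · by_cases h2 : k = j
        · subst h2
          simp only [hg_def, if_neg h1, if_pos rfl]
          exact hxj
        · simp only [hg_def, if_neg h1, if_neg h2]
          exact (hne k).choose_spec
    have hmem := htrans g hg
    have hcard := H.uniform _ hmem
    have hgi : g i = x := by simp only [hg_def, if_pos rfl]
    have hgj : g j = x := by simp [hg_def, Ne.symm hij]
    have himg : Finset.image g Finset.univ ⊆ Finset.image g (Finset.univ.erase j) := by
      intro y hy
      obtain ⟨k, -, rfl⟩ := Finset.mem_image.mp hy
      by_cases hk : k = j
      · subst hk
        refine Finset.mem_image.mpr ⟨i, Finset.mem_erase.mpr ⟨hij, Finset.mem_univ i⟩, ?_⟩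
        rw [hgi, hgj]
      · exact Finset.mem_image.mpr ⟨k, Finset.mem_erase.mpr ⟨hk, Finset.mem_univ k⟩, rfl⟩
    have hrle : (Finset.image g Finset.univ).card ≤ r - 1 := by
      calc (Finset.image g Finset.univ).card ≤ (Finset.image g (Finset.univ.erase j)).card :=
          Finset.card_le_card himg
        _ ≤ (Finset.univ.erase j).card := Finset.card_image_le
        _ = r - 1 := by
            rw [Finset.card_erase_of_mem (Finset.mem_univ j), Finset.card_univ, Fintype.card_fin]
    rw [hcard] at hrle
    have hrpos : 0 < r := i.pos
    omega
  have hφ : ∀ (i : Fin r) (x : Fin (t i)), (((A i).orderIsoOfFin (hA i)) x : Fin n) ∈ A i :=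
    fun i x => (((A i).orderIsoOfFin (hA i)) x).2
  refine ⟨fun p => (((A p.1).orderIsoOfFin (hA p.1)) p.2 : Fin n), ?_, ?_⟩
  · rintro ⟨i, x⟩ ⟨j, y⟩ h
    dsimp only at h
    by_cases hij : i = j
    · subst hij
      have hxy : x = y := ((A i).orderIsoOfFin (hA i)).injective (Subtype.coe_injective h)
      rw [hxy]
    · exact (hdisj i j hij _ (hφ i x) (by rw [h]; exact hφ j y)).elim
  · intro e he
    have he' : ∀ i : Fin r, (e.filter (fun q => q.1 = i)).card = 1 := by
      have h1 : e ∈ Finset.univ.filter fun e : Finset (Σ i : Fin r, Fin (t i)) =>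
          ∀ i : Fin r, (e.filter fun x => x.1 = i).card = 1 := he
      exact (Finset.mem_filter.mp h1).2
    have hx : ∀ i : Fin r, ∃ p : (Σ i : Fin r, Fin (t i)), e.filter (fun q => q.1 = i) = {p} :=
      fun i => Finset.card_eq_one.mp (he' i)
    choose x hxspec using hx
    have hxe : ∀ i, x i ∈ e ∧ (x i).1 = i := by
      intro i
      have h1 : x i ∈ e.filter (fun q => q.1 = i) := by
        rw [hxspec i]
        exact Finset.mem_singleton_self _
      exact Finset.mem_filter.mp h1
    have he_eq : e = Finset.image x Finset.univ := by
      ext p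
      constructor
      · intro hp
        have h1 : p ∈ e.filter (fun q => q.1 = p.1) := Finset.mem_filter.mpr ⟨hp, rfl⟩
        rw [hxspec p.1, Finset.mem_singleton] at h1
        exact Finset.mem_image.mpr ⟨p.1, Finset.mem_univ _, h1.symm⟩
      · intro hp
        obtain ⟨i, -, rfl⟩ := Finset.mem_image.mp hp
        exact (hxe i).1
    rw [he_eq, Finset.image_image]
    apply htrans
    intro i
    have h3 : ((fun p : (Σ i : Fin r, Fin (t i)) =>
        (((A p.1).orderIsoOfFin (hA p.1)) p.2 : Fin n)) ∘ x) i ∈ A (x i).1 :=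
      hφ (x i).1 (x i).2
    rwa [(hxe i).2] at h3

/-- The Kővári–Sós–Turán / Erdős theorem:
`ex(n, K^{(r)}_{t₁,…,t_r}) ≤ O_{t₁,…,t_r}(n^{r − 1/(t₁⋯t_{r−1})})`. -/
theorem stmt11 (r : ℕ) (hr : 2 ≤ r) (t : Fin r → ℕ) (ht : ∀ i, 1 ≤ t i) :
    ∃ C : ℝ, 0 < C ∧ ∀ n : ℕ,
      (exNum n (completeMultipartite r t) : ℝ) ≤
        C * (n : ℝ) ^ ((r : ℝ) -
          1 / ∏ i ∈ Finset.univ.filter (fun i : Fin r => (i : ℕ) < r - 1), (t i : ℝ)) := by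
  classical
  obtain ⟨C, hCpos, hC⟩ := key_bound r (by omega) t ht
  refine ⟨C, hCpos, ?_⟩
  intro n
  have hSdef : exNum n (completeMultipartite r t) = sSup {m : ℕ | ∃ H : HGraph r (Fin n),
      H.edges.card = m ∧ ¬ H.ContainsCopy (completeMultipartite r t)} := rfl
  rw [hSdef]
  rcases Set.eq_empty_or_nonempty {m : ℕ | ∃ H : HGraph r (Fin n),
      H.edges.card = m ∧ ¬ H.ContainsCopy (completeMultipartite r t)} with hSe | hSne
  · rw [hSe, csSup_empty]
    simp only [Nat.bot_eq_zero, Nat.cast_zero]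
    exact mul_nonneg hCpos.le (Real.rpow_nonneg (Nat.cast_nonneg n) _)
  · have hbdd : BddAbove {m : ℕ | ∃ H : HGraph r (Fin n),
        H.edges.card = m ∧ ¬ H.ContainsCopy (completeMultipartite r t)} := by
      refine ⟨n.choose r, ?_⟩
      rintro m ⟨H, hm, -⟩
      rw [← hm]
      calc H.edges.card ≤ (powersetCard r (univ : Finset (Fin n))).card := by
            apply Finset.card_le_card
            intro e he
            exact Finset.mem_powersetCard.mpr ⟨Finset.subset_univ e, H.uniform e he⟩
        _ = n.choose r := by rw [Finset.card_powersetCard, Finset.card_univ, Fintype.card_fin]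
    have hmem := Nat.sSup_mem hSne hbdd
    obtain ⟨H, hcard, hnc⟩ := hmem
    rw [← hcard]
    exact hC n H.edges H.uniform (fun hb => hnc (hasBox_containsCopy t ht H hb))
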